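/- Let d ≥ 1, let S be a symmetric positive definite real d×d matrix, let μ ∈ ℝ^d, let α > 0 and p < 0. Suppose e* minimizes the Euclidean norm ‖e‖₂ over the nonempty feasible set { e ∈ ℝ^d : α ≤ μᵀe + p·‖S e‖₂ }. Then e* ≠ 0, the constraint is active (α = μᵀe* + p‖S e*‖₂), and there exist real numbers λ > 0, k₁ > 0, k₂ > 0 such that k₁·e* + k₂·S² e* = λ·μ; equivalently, e* = λ (k₁ I + k₂ Σ)^{-1} μ with Σ = S². -/

import Mathlib

open Matrix in
lemma aux_symm_dot {d : ℕ} (S : Matrix (Fin d) (Fin d) ℝ) (hSsymm : S.IsSymm)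
    (x y : Fin d → ℝ) :
    ∑ f, S.mulVec x f * S.mulVec y f = ∑ f, x f * (S * S).mulVec y f := by
  have hv : x ᵥ* S = S *ᵥ x := by
    conv_lhs => rw [← hSsymm]
    exact Matrix.vecMul_transpose S x
  have h2 : ∑ f, x f * (S * S).mulVec y f = x ⬝ᵥ ((S * S) *ᵥ y) := rfl
  rw [h2, ← Matrix.mulVec_mulVec, Matrix.dotProduct_mulVec, hv]
  rfl

lemma aux_sum_sq_pos {d : ℕ} {v : Fin d → ℝ} (hv : v ≠ 0) :
    0 < ∑ f, v f ^ 2 := by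
  rcases Function.ne_iff.mp hv with ⟨i, hi⟩
  have h1 : 0 < v i ^ 2 :=
    lt_of_le_of_ne (sq_nonneg _) (Ne.symm (pow_ne_zero 2 hi))
  exact Finset.sum_pos' (fun f _ => sq_nonneg _) ⟨i, Finset.mem_univ i, h1⟩

lemma aux_sum_sq_zero {d : ℕ} {v : Fin d → ℝ} (h : ∑ f, v f ^ 2 ≤ 0) (f : Fin d) :
    v f = 0 := by
  have h0 : ∑ f, v f ^ 2 = 0 :=
    le_antisymm h (Finset.sum_nonneg fun f _ => sq_nonneg _)
  have := (Finset.sum_eq_zero_iff_of_nonneg (fun f _ => sq_nonneg (v f))).mp h0 f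
    (Finset.mem_univ f)
  exact (pow_eq_zero_iff two_ne_zero).mp this

lemma aux_expand_sq {d : ℕ} (a b : Fin d → ℝ) (t : ℝ) :
    ∑ f, (a f + t * b f) ^ 2
      = ∑ f, a f ^ 2 + 2 * t * (∑ f, a f * b f) + t ^ 2 * ∑ f, b f ^ 2 := by
  have h1 : ∑ f, (a f + t * b f) ^ 2
      = ∑ f, (a f ^ 2 + 2 * t * (a f * b f) + t ^ 2 * b f ^ 2) :=
    Finset.sum_congr rfl fun f _ => by ring
  rw [h1, Finset.sum_add_distrib, Finset.sum_add_distrib, ← Finset.mul_sum,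
    ← Finset.mul_sum]

set_option maxHeartbeats 2000000

/-- If `e*` minimizes `‖e‖₂` over the feasible set
`{e : α ≤ μᵀe + p ‖S e‖₂}` (with `S` symmetric positive definite, `α > 0`,
`p < 0`), then `e* ≠ 0`, the constraint is active, and there exist
`λ, k₁, k₂ > 0` with `k₁ e* + k₂ Σ e* = λ μ` where `Σ = S²`. -/
theorem stmt_14 (d : ℕ) (hd : 1 ≤ d) (S : Matrix (Fin d) (Fin d) ℝ)
    (hS : S.PosDef) (hSsymm : S.IsSymm)
    (μ : Fin d → ℝ) (α : ℝ) (hα : 0 < α) (p : ℝ) (hp : p < 0)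
    (estar : Fin d → ℝ)
    (hfeas : α ≤ ∑ f, μ f * estar f + p * Real.sqrt (∑ f, S.mulVec estar f ^ 2))
    (hopt : ∀ e : Fin d → ℝ,
      α ≤ ∑ f, μ f * e f + p * Real.sqrt (∑ f, S.mulVec e f ^ 2) →
      Real.sqrt (∑ f, estar f ^ 2) ≤ Real.sqrt (∑ f, e f ^ 2)) :
    estar ≠ 0 ∧
    α = ∑ f, μ f * estar f + p * Real.sqrt (∑ f, S.mulVec estar f ^ 2) ∧
    ∃ lam k₁ k₂ : ℝ, 0 < lam ∧ 0 < k₁ ∧ 0 < k₂ ∧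
      ∀ f, k₁ * estar f + k₂ * (S * S).mulVec estar f = lam * μ f := by
  classical
  -- e* ≠ 0
  have hne : estar ≠ 0 := by
    intro h
    rw [h] at hfeas
    simp at hfeas
    linarith
  have hR2 : 0 < ∑ f, estar f ^ 2 := aux_sum_sq_pos hne
  -- ‖S e*‖² > 0
  have hSe2 : 0 < ∑ f, S.mulVec estar f ^ 2 := by
    rcases lt_or_ge 0 (∑ f, S.mulVec estar f ^ 2) with h | h
    · exact h
    · exfalso
      have hz : ∀ f, S.mulVec estar f = 0 := aux_sum_sq_zero h
      have hpd := hS.dotProduct_mulVec_pos hne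
      have : dotProduct (star estar) (S.mulVec estar) = 0 := by
        simp [dotProduct, hz]
      rw [this] at hpd
      exact lt_irrefl 0 hpd
  set A := Real.sqrt (∑ f, S.mulVec estar f ^ 2) with hAdef
  clear_value A
  have hApos : 0 < A := by rw [hAdef]; exact Real.sqrt_pos.mpr hSe2
  have hAsq : A ^ 2 = ∑ f, S.mulVec estar f ^ 2 := by
    rw [hAdef]; exact Real.sq_sqrt hSe2.le
  have hA' : A ≠ 0 := hApos.ne'
  -- scaling lemmas
  have hsmul_sqrtS : ∀ (t : ℝ), 0 ≤ t → ∀ e : Fin d → ℝ,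
      Real.sqrt (∑ f, S.mulVec (t • e) f ^ 2)
        = t * Real.sqrt (∑ f, S.mulVec e f ^ 2) := by
    intro t ht e
    rw [Matrix.mulVec_smul]
    have h1 : ∑ f, (t • S.mulVec e) f ^ 2 = t ^ 2 * ∑ f, S.mulVec e f ^ 2 := by
      rw [Finset.mul_sum]
      refine Finset.sum_congr rfl fun f _ => ?_
      simp [Pi.smul_apply, smul_eq_mul, mul_pow]
    rw [h1, Real.sqrt_mul (sq_nonneg t), Real.sqrt_sq ht]
  have hsmul_sqrt : ∀ (t : ℝ), 0 ≤ t → ∀ e : Fin d → ℝ,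
      Real.sqrt (∑ f, (t • e) f ^ 2) = t * Real.sqrt (∑ f, e f ^ 2) := by
    intro t ht e
    have h1 : ∑ f, (t • e) f ^ 2 = t ^ 2 * ∑ f, e f ^ 2 := by
      rw [Finset.mul_sum]
      refine Finset.sum_congr rfl fun f _ => ?_
      simp [Pi.smul_apply, smul_eq_mul, mul_pow]
    rw [h1, Real.sqrt_mul (sq_nonneg t), Real.sqrt_sq ht]
  -- every point of the closed ball of radius ‖e*‖ has constraint value ≤ α
  have hball : ∀ e : Fin d → ℝ, (∑ f, e f ^ 2) ≤ ∑ f, estar f ^ 2 →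
      ∑ f, μ f * e f + p * Real.sqrt (∑ f, S.mulVec e f ^ 2) ≤ α := by
    intro e he
    by_contra hcon
    push_neg at hcon
    set Ge := ∑ f, μ f * e f + p * Real.sqrt (∑ f, S.mulVec e f ^ 2) with hGe
    clear_value Ge
    have hGe0 : 0 < Ge := hα.trans hcon
    set t := α / Ge with ht
    clear_value t
    have ht0 : 0 < t := by rw [ht]; exact div_pos hα hGe0
    have ht1 : t < 1 := by rw [ht]; exact (div_lt_one hGe0).mpr hcon
    have hμt : ∑ f, μ f * (t • e) f = t * ∑ f, μ f * e f := by
      rw [Finset.mul_sum]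
      refine Finset.sum_congr rfl fun f _ => ?_
      simp [Pi.smul_apply, smul_eq_mul]; ring
    have hfeas' : α ≤ ∑ f, μ f * (t • e) f
        + p * Real.sqrt (∑ f, S.mulVec (t • e) f ^ 2) := by
      rw [hμt, hsmul_sqrtS t ht0.le e]
      have heq : t * (∑ f, μ f * e f)
          + p * (t * Real.sqrt (∑ f, S.mulVec e f ^ 2)) = t * Ge := by
        rw [hGe]; ring
      rw [heq, ht, div_mul_cancel₀ α hGe0.ne']
    have hle := hopt (t • e) hfeas'
    rw [hsmul_sqrt t ht0.le e] at hle
    have h2 : Real.sqrt (∑ f, e f ^ 2) ≤ Real.sqrt (∑ f, estar f ^ 2) :=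
      Real.sqrt_le_sqrt he
    have h3 : 0 < Real.sqrt (∑ f, estar f ^ 2) := Real.sqrt_pos.mpr hR2
    nlinarith
  -- activity
  have hact : α = ∑ f, μ f * estar f + p * A := by
    have h := hball estar le_rfl
    rw [← hAdef] at h
    exact le_antisymm hfeas h
  -- the gradient vector
  set Gv : Fin d → ℝ := fun f => μ f + (p / A) * (S * S).mulVec estar f with hGv
  clear_value Gv
  -- Euler identity
  have hSS : ∑ f, (S * S).mulVec estar f * estar f = A ^ 2 := by
    rw [hAsq]
    calc ∑ f, (S * S).mulVec estar f * estar f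
        = ∑ f, estar f * (S * S).mulVec estar f := by
          refine Finset.sum_congr rfl fun f _ => mul_comm _ _
      _ = ∑ f, S.mulVec estar f * S.mulVec estar f :=
          (aux_symm_dot S hSsymm estar estar).symm
      _ = ∑ f, S.mulVec estar f ^ 2 := by
          refine Finset.sum_congr rfl fun f _ => (sq _).symm
  have hEuler : ∑ f, Gv f * estar f = α := by
    have hexp : ∑ f, Gv f * estar f
        = ∑ f, μ f * estar f
          + (p / A) * ∑ f, (S * S).mulVec estar f * estar f := by
      rw [hGv, Finset.mul_sum, ← Finset.sum_add_distrib]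
      refine Finset.sum_congr rfl fun f _ => ?_
      ring
    rw [hexp, hSS, hact]
    field_simp
  -- the key directional inequality
  have hdir : ∀ v : Fin d → ℝ, (∑ f, estar f * v f) < 0 → ∑ f, Gv f * v f ≤ 0 := by
    intro v hv
    set B := ∑ f, S.mulVec estar f * S.mulVec v f with hB
    clear_value B
    set C := ∑ f, S.mulVec v f ^ 2 with hC
    clear_value C
    have hC0 : 0 ≤ C := by
      rw [hC]; exact Finset.sum_nonneg fun f _ => sq_nonneg _
    have hBalt : ∑ f, (S * S).mulVec estar f * v f = B := by
      rw [hB]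
      calc ∑ f, (S * S).mulVec estar f * v f
          = ∑ f, v f * (S * S).mulVec estar f := by
            refine Finset.sum_congr rfl fun f _ => mul_comm _ _
        _ = ∑ f, S.mulVec v f * S.mulVec estar f :=
            (aux_symm_dot S hSsymm v estar).symm
        _ = ∑ f, S.mulVec estar f * S.mulVec v f := by
            refine Finset.sum_congr rfl fun f _ => mul_comm _ _
    have hGvv : ∑ f, Gv f * v f = ∑ f, μ f * v f + (p / A) * B := by
      rw [← hBalt, hGv, Finset.mul_sum, ← Finset.sum_add_distrib]
      refine Finset.sum_congr rfl fun f _ => ?_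
      ring
    set D := ∑ f, μ f * v f + (p / A) * B with hD
    clear_value D
    rw [hGvv]
    have hvne : v ≠ 0 := by
      intro h; rw [h] at hv; simp at hv
    have hV2 : 0 < ∑ f, v f ^ 2 := aux_sum_sq_pos hvne
    set V2 := ∑ f, v f ^ 2 with hV2def
    clear_value V2
    set t0 := -(2 * ∑ f, estar f * v f) / V2 with ht0def
    clear_value t0
    have ht0pos : 0 < t0 := by
      rw [ht0def]; exact div_pos (by linarith) hV2
    set K := (-p) * C / (2 * A) with hK
    clear_value K
    have hK0 : 0 ≤ K := by
      rw [hK]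
      apply div_nonneg
      · exact mul_nonneg (by linarith) hC0
      · linarith
    have key : ∀ t : ℝ, 0 < t → t ≤ t0 → D ≤ t * K := by
      intro t htpos htle
      have hball_e : (∑ f, (estar + t • v) f ^ 2) ≤ ∑ f, estar f ^ 2 := by
        have hexp : ∑ f, (estar + t • v) f ^ 2
            = ∑ f, estar f ^ 2 + t * (2 * ∑ f, estar f * v f) + t ^ 2 * V2 := by
          rw [hV2def, Finset.mul_sum, Finset.mul_sum, Finset.mul_sum,
            ← Finset.sum_add_distrib, ← Finset.sum_add_distrib]
          refine Finset.sum_congr rfl fun f _ => ?_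
          simp [Pi.add_apply, Pi.smul_apply, smul_eq_mul]
          ring
        rw [hexp]
        have hts : t * V2 ≤ -(2 * ∑ f, estar f * v f) := by
          have := mul_le_mul_of_nonneg_right htle hV2.le
          rwa [ht0def, div_mul_cancel₀ _ hV2.ne'] at this
        nlinarith
      have hge := hball _ hball_e
      have hμe : ∑ f, μ f * (estar + t • v) f
          = ∑ f, μ f * estar f + t * ∑ f, μ f * v f := by
        rw [Finset.mul_sum, ← Finset.sum_add_distrib]
        refine Finset.sum_congr rfl fun f _ => ?_
        simp [Pi.add_apply, Pi.smul_apply, smul_eq_mul]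
        ring
      have hSsum : ∑ f, S.mulVec (estar + t • v) f ^ 2
          = A ^ 2 + (2 * t * B + t ^ 2 * C) := by
        have hmv : S.mulVec (estar + t • v) = S.mulVec estar + t • S.mulVec v := by
          rw [Matrix.mulVec_add, Matrix.mulVec_smul]
        rw [hmv]
        have hpt : ∑ f, (S.mulVec estar + t • S.mulVec v) f ^ 2
            = ∑ f, (S.mulVec estar f + t * S.mulVec v f) ^ 2 := by
          refine Finset.sum_congr rfl fun f _ => ?_
          simp [Pi.add_apply, Pi.smul_apply, smul_eq_mul]
        rw [hpt, aux_expand_sq, hAsq, hB, hC]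
        ring
      set q := 2 * t * B + t ^ 2 * C with hq
      clear_value q
      have hnn : 0 ≤ A ^ 2 + q := by
        rw [← hSsum]
        exact Finset.sum_nonneg fun f _ => sq_nonneg _
      have hrhs0 : 0 ≤ A + q / (2 * A) := by
        have heq : A + q / (2 * A) = (A ^ 2 + (A ^ 2 + q)) / (2 * A) := by
          field_simp; ring
        rw [heq]
        exact div_nonneg (add_nonneg (sq_nonneg A) hnn) (by linarith)
      have hsqrt_le : Real.sqrt (A ^ 2 + q) ≤ A + q / (2 * A) := by
        rw [show A + q / (2 * A) = Real.sqrt ((A + q / (2 * A)) ^ 2) from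
          (Real.sqrt_sq hrhs0).symm]
        apply Real.sqrt_le_sqrt
        have hid : (A + q / (2 * A)) ^ 2
            = A ^ 2 + q + (q / (2 * A)) ^ 2 := by
          field_simp; ring
        nlinarith [sq_nonneg (q / (2 * A))]
      have hlow : ∑ f, μ f * estar f + t * (∑ f, μ f * v f)
          + p * (A + q / (2 * A)) ≤ α := by
        have hp1 : p * (A + q / (2 * A)) ≤ p * Real.sqrt (A ^ 2 + q) :=
          mul_le_mul_of_nonpos_left hsqrt_le hp.le
        have hge2 := hge
        rw [hμe, hSsum] at hge2
        linarith
      have hre : p * (A + q / (2 * A))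
          = p * A + t * ((p / A) * B) + t ^ 2 * (p * C / (2 * A)) := by
        rw [hq]; field_simp; ring
      have h0 : t * D + t ^ 2 * (p * C / (2 * A)) ≤ 0 := by
        rw [hD]
        rw [hre, hact] at hlow
        nlinarith
      have htK : t * D ≤ t * (t * K) := by
        have heq2 : t * (t * K) = -(t ^ 2 * (p * C / (2 * A))) := by
          rw [hK]; field_simp
        rw [heq2]
        linarith
      exact le_of_mul_le_mul_left htK htpos
    by_contra hDpos
    push_neg at hDpos
    have hK1 : 0 < K + 1 := by linarith
    set t := min t0 (D / (K + 1)) with htdef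
    clear_value t
    have htpos : 0 < t := by rw [htdef]; exact lt_min ht0pos (div_pos hDpos hK1)
    have h1 := key t htpos (by rw [htdef]; exact min_le_left _ _)
    have h2 : t ≤ D / (K + 1) := by rw [htdef]; exact min_le_right _ _
    have h3 : t * K ≤ (D / (K + 1)) * K := mul_le_mul_of_nonneg_right h2 hK0
    have h4 : (D / (K + 1)) * K < D := by
      rw [div_mul_eq_mul_div, div_lt_iff₀ hK1]
      nlinarith
    linarith
  -- orthogonal directions give zero
  have hperp : ∀ v : Fin d → ℝ, (∑ f, estar f * v f) = 0 → ∑ f, Gv f * v f ≤ 0 := by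
    intro v hv
    by_contra hcon
    push_neg at hcon
    set ε := (∑ f, Gv f * v f) / (2 * α) with hε
    have hεpos : 0 < ε := div_pos hcon (by linarith)
    have hdot : ∑ f, estar f * (v - ε • estar) f < 0 := by
      have hexp : ∑ f, estar f * (v - ε • estar) f
          = ∑ f, estar f * v f - ε * ∑ f, estar f ^ 2 := by
        rw [Finset.mul_sum, ← Finset.sum_sub_distrib]
        refine Finset.sum_congr rfl fun f _ => ?_
        simp [Pi.sub_apply, Pi.smul_apply, smul_eq_mul]
        ring
      rw [hexp, hv]
      have : 0 < ε * ∑ f, estar f ^ 2 := mul_pos hεpos hR2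
      linarith
    have happ := hdir (v - ε • estar) hdot
    have hexp2 : ∑ f, Gv f * (v - ε • estar) f
        = ∑ f, Gv f * v f - ε * ∑ f, Gv f * estar f := by
      rw [Finset.mul_sum, ← Finset.sum_sub_distrib]
      refine Finset.sum_congr rfl fun f _ => ?_
      simp [Pi.sub_apply, Pi.smul_apply, smul_eq_mul]
      ring
    rw [hexp2, hEuler, hε] at happ
    have : (∑ f, Gv f * v f) / (2 * α) * α = (∑ f, Gv f * v f) / 2 := by
      field_simp
    rw [this] at happ
    linarith
  have hperp0 : ∀ v : Fin d → ℝ, (∑ f, estar f * v f) = 0 → ∑ f, Gv f * v f = 0 := by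
    intro v hv
    have h1 := hperp v hv
    have hvneg : ∑ f, estar f * (-v) f = 0 := by
      rw [← neg_eq_zero, ← hv, ← Finset.sum_neg_distrib]
      refine Finset.sum_congr rfl fun f _ => ?_
      simp
    have h2 := hperp (-v) hvneg
    have hGneg : ∑ f, Gv f * (-v) f = -∑ f, Gv f * v f := by
      rw [← Finset.sum_neg_distrib]
      refine Finset.sum_congr rfl fun f _ => ?_
      simp
    rw [hGneg] at h2
    linarith
  -- conclude Gv = c • e*
  set c := α / (∑ f, estar f ^ 2) with hc
  clear_value c
  have hcpos : 0 < c := by rw [hc]; exact div_pos hα hR2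
  have hGc : ∀ f, Gv f = c * estar f := by
    set w : Fin d → ℝ := fun f => Gv f - c * estar f with hwdef
    clear_value w
    have hdotw : ∑ f, estar f * w f = 0 := by
      have hexp : ∑ f, estar f * w f
          = ∑ f, Gv f * estar f - c * ∑ f, estar f ^ 2 := by
        rw [Finset.mul_sum, ← Finset.sum_sub_distrib]
        refine Finset.sum_congr rfl fun f _ => ?_
        rw [hwdef]
        ring
      rw [hexp, hEuler, hc, div_mul_cancel₀ α hR2.ne']
      ring
    have h0 := hperp0 w hdotw
    have hexp2 : ∑ f, Gv f * w f = ∑ f, w f ^ 2 + c * ∑ f, estar f * w f := by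
      rw [Finset.mul_sum, ← Finset.sum_add_distrib]
      refine Finset.sum_congr rfl fun f _ => ?_
      rw [hwdef]
      ring
    rw [hexp2, hdotw] at h0
    have hw2 : ∑ f, w f ^ 2 ≤ 0 := by linarith
    intro f
    have hwf : w f = 0 := aux_sum_sq_zero hw2 f
    rw [hwdef] at hwf
    simp at hwf
    linarith [hwf]
  refine ⟨hne, hact, 1, c, -p / A, one_pos, hcpos,
    div_pos (neg_pos.mpr hp) hApos, ?_⟩
  intro f
  have hf := hGc f
  rw [hGv] at hf
  simp only at hf
  field_simp at hf ⊢
  linarith
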